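/- Let A be a bounded linear operator on a complex Hilbert space, x, y vectors, and f, g non-negative continuous functions on [0,∞) with f(t)g(t) = t for t ≥ 0. Then |⟨Ax, y⟩|² ≤ ⟨f²(|A|)x, x⟩ · ⟨g²(|A*|)y, y⟩. -/

import Mathlib

noncomputable section
open ContinuousLinearMap

variable {H : Type*} [NormedAddCommGroup H] [InnerProductSpace ℂ H] [CompleteSpace H]

set_option maxHeartbeats 1000000

lemma aux_pow (A : H →L[ℂ] H) (n : ℕ) :
    A * (adjoint A * A) ^ n = (A * adjoint A) ^ n * A := by
  induction n with
  | zero => simp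
  | succ m ih =>
    rw [pow_succ, ← mul_assoc, ih, mul_assoc,
      show A * (adjoint A * A) = (A * adjoint A) * A from (mul_assoc A (adjoint A) A).symm,
      ← mul_assoc, ← pow_succ]

lemma aux_poly (A : H →L[ℂ] H) (p : Polynomial ℝ) :
    A * Polynomial.aeval (adjoint A * A) p = Polynomial.aeval (A * adjoint A) p * A := by
  induction p using Polynomial.induction_on with
  | C r => simp [Algebra.algebraMap_eq_smul_one, mul_smul_comm, smul_mul_assoc]
  | add p q hp hq => simp [mul_add, add_mul, hp, hq]
  | monomial n r _ =>
    simp only [map_mul, map_pow, Polynomial.aeval_C, Polynomial.aeval_X,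
      Algebra.algebraMap_eq_smul_one, smul_mul_assoc, mul_smul_comm, one_mul, mul_one]
    rw [aux_pow]

lemma aux_sa (A : H →L[ℂ] H) : IsSelfAdjoint (adjoint A * A) := by
  rw [← star_eq_adjoint]; exact IsSelfAdjoint.star_mul_self A

lemma aux_sa' (A : H →L[ℂ] H) : IsSelfAdjoint (A * adjoint A) := by
  have := aux_sa (adjoint A)
  rwa [adjoint_adjoint] at this

/-- Intertwining: `A · h(A*A) = h(AA*) · A` for continuous `h`. -/
lemma aux_intertwine (A : H →L[ℂ] H) (h : ℝ → ℝ) (hh : Continuous h) :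
    A * cfc h (adjoint A * A) = cfc h (A * adjoint A) * A := by
  set T := adjoint A * A with hT
  set S := A * adjoint A with hS
  have hTsa := aux_sa A
  have hSsa := aux_sa' A
  rw [← sub_eq_zero, ← norm_eq_zero]
  by_contra hne
  have hpos : 0 < ‖A * cfc h T - cfc h S * A‖ := lt_of_le_of_ne (norm_nonneg _) (Ne.symm hne)
  set R : ℝ := max (‖T‖ * ‖(1 : H →L[ℂ] H)‖) (‖S‖ * ‖(1 : H →L[ℂ] H)‖) with hR
  have hTspec : spectrum ℝ T ⊆ Set.Icc (-R) R := by
    intro t ht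
    have := spectrum.subset_closedBall_norm_mul (𝕜 := ℝ) T ht
    simp only [Metric.mem_closedBall, dist_zero_right, Real.norm_eq_abs] at this
    have : |t| ≤ R := this.trans (le_max_left _ _)
    exact ⟨neg_le_of_abs_le this, le_of_abs_le this⟩
  have hSspec : spectrum ℝ S ⊆ Set.Icc (-R) R := by
    intro t ht
    have := spectrum.subset_closedBall_norm_mul (𝕜 := ℝ) S ht
    simp only [Metric.mem_closedBall, dist_zero_right, Real.norm_eq_abs] at this
    have : |t| ≤ R := this.trans (le_max_right _ _)
    exact ⟨neg_le_of_abs_le this, le_of_abs_le this⟩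
  have hA : 0 < ‖A‖ := by
    by_contra hA
    push_neg at hA
    have : A = 0 := by simpa using le_antisymm hA (norm_nonneg A)
    simp [this] at hne
  set ε : ℝ := ‖A * cfc h T - cfc h S * A‖ / (4 * ‖A‖) with hε
  have hεpos : 0 < ε := div_pos hpos (by positivity)
  obtain ⟨p, hp⟩ := exists_polynomial_near_of_continuousOn (-R) R h hh.continuousOn ε hεpos
  have hbT : ‖cfc h T - cfc p.eval T‖ ≤ ε := by
    rw [← cfc_sub h p.eval T hh.continuousOn (Polynomial.continuousOn _)]
    refine norm_cfc_le hεpos.le fun t ht => ?_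
    have := hp t (hTspec ht)
    rw [Real.norm_eq_abs, abs_sub_comm]
    exact this.le
  have hbS : ‖cfc h S - cfc p.eval S‖ ≤ ε := by
    rw [← cfc_sub h p.eval S hh.continuousOn (Polynomial.continuousOn _)]
    refine norm_cfc_le hεpos.le fun t ht => ?_
    have := hp t (hSspec ht)
    rw [Real.norm_eq_abs, abs_sub_comm]
    exact this.le
  have hpoly : A * cfc p.eval T = cfc p.eval S * A := by
    rw [cfc_polynomial p T, cfc_polynomial p S, aux_poly]
  have : ‖A * cfc h T - cfc h S * A‖ ≤ 2 * (‖A‖ * ε) := by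
    calc ‖A * cfc h T - cfc h S * A‖
        = ‖A * (cfc h T - cfc p.eval T) + ((cfc p.eval S - cfc h S) * A
            + (A * cfc p.eval T - cfc p.eval S * A))‖ := by congr 1; noncomm_ring
      _ ≤ ‖A * (cfc h T - cfc p.eval T)‖ + ‖(cfc p.eval S - cfc h S) * A‖ := by
          rw [hpoly, sub_self, add_zero]; exact norm_add_le _ _
      _ ≤ ‖A‖ * ε + ε * ‖A‖ := by
          gcongr
          · exact (norm_mul_le _ _).trans (by gcongr)
          · refine (norm_mul_le _ _).trans ?_
            gcongr
            rw [norm_sub_rev]; exact hbS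
      _ = 2 * (‖A‖ * ε) := by ring
  have h2 : 2 * (‖A‖ * ε) = ‖A * cfc h T - cfc h S * A‖ / 2 := by
    rw [hε]; field_simp; ring
  rw [h2] at this
  linarith


/-- The numerical radius of a bounded operator. -/
def nrad (A : H →L[ℂ] H) : ℝ :=
  sSup {r : ℝ | ∃ x : H, ‖x‖ = 1 ∧ r = ‖(inner ℂ (A x) x : ℂ)‖}

/-- The absolute value |A| = (A*A)^(1/2) via continuous functional calculus. -/
def oabs (A : H →L[ℂ] H) : H →L[ℂ] H := cfc Real.sqrt (adjoint A * A)

/-- The 2×2 block operator matrix [[A,B],[C,D]] on the Hilbert space H ⊕ H. -/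
def blk (A B C D : H →L[ℂ] H) : WithLp 2 (H × H) →L[ℂ] WithLp 2 (H × H) :=
  ((WithLp.prodContinuousLinearEquiv 2 ℂ H H).symm.toContinuousLinearMap).comp
    ((((A.comp (fst ℂ H H)) + B.comp (snd ℂ H H)).prod
      ((C.comp (fst ℂ H H)) + D.comp (snd ℂ H H))).comp
      (WithLp.prodContinuousLinearEquiv 2 ℂ H H).toContinuousLinearMap)

theorem stmt_17 (A : H →L[ℂ] H) (x y : H) (f g : ℝ → ℝ)
    (hf : Continuous f) (hg : Continuous g)
    (hf0 : ∀ t, 0 ≤ t → 0 ≤ f t) (hg0 : ∀ t, 0 ≤ t → 0 ≤ g t)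
    (hfg : ∀ t, 0 ≤ t → f t * g t = t) :
    ‖(inner ℂ (A x) y : ℂ)‖ ^ 2 ≤
      (inner ℂ ((cfc (fun t => f t ^ 2) (oabs A)) x) x : ℂ).re
        * (inner ℂ ((cfc (fun t => g t ^ 2) (oabs (adjoint A))) y) y : ℂ).re := by
  have hTsa := aux_sa A
  have hSsa := aux_sa' A
  set T := adjoint A * A with hTdef
  set S := A * adjoint A with hSdef
  have hT0 : (0 : H →L[ℂ] H) ≤ T := by rw [hTdef, ← star_eq_adjoint]; exact star_mul_self_nonneg A
  have hS0 : (0 : H →L[ℂ] H) ≤ S := by rw [hSdef, ← star_eq_adjoint]; exact mul_star_self_nonneg A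
  set F := fun t : ℝ => f (Real.sqrt t) ^ 2 with hFdef
  set G := fun t : ℝ => g (Real.sqrt t) ^ 2 with hGdef
  have hFcont : Continuous F := (hf.comp Real.continuous_sqrt).pow 2
  have hGcont : Continuous G := (hg.comp Real.continuous_sqrt).pow 2
  have hgoal1 : cfc (fun t => f t ^ 2) (oabs A) = cfc F T := by
    rw [oabs, ← cfc_comp (fun t => f t ^ 2) Real.sqrt T hTsa
      ((hf.pow 2).continuousOn) Real.continuous_sqrt.continuousOn]
    rfl
  have hgoal2 : cfc (fun t => g t ^ 2) (oabs (adjoint A)) = cfc G S := by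
    rw [oabs, adjoint_adjoint, ← hSdef, ← cfc_comp (fun t => g t ^ 2) Real.sqrt S hSsa
      ((hg.pow 2).continuousOn) Real.continuous_sqrt.continuousOn]
    rfl
  rw [hgoal1, hgoal2]
  set P := (inner ℂ ((cfc F T) x) x : ℂ).re with hPdef
  set Q := (inner ℂ ((cfc G S) y) y : ℂ).re with hQdef
  have hP0 : 0 ≤ P := by
    have hpos : (0 : H →L[ℂ] H) ≤ cfc F T := cfc_nonneg fun t _ => sq_nonneg _
    exact (Complex.nonneg_iff.mp (((nonneg_iff_isPositive _).mp hpos).inner_nonneg_left x)).1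
  have hQ0 : 0 ≤ Q := by
    have hpos : (0 : H →L[ℂ] H) ≤ cfc G S := cfc_nonneg fun t _ => sq_nonneg _
    exact (Complex.nonneg_iff.mp (((nonneg_iff_isPositive _).mp hpos).inner_nonneg_left y)).1
  have key : ∀ ε : ℝ, 0 < ε → ε ≤ 1 →
      ‖(inner ℂ (A x) y : ℂ)‖ ^ 2 ≤ P * Q + ε * (P * Q + 2 * P * ‖y‖ ^ 2) := by
    intro ε hε hε1
    set pe := fun t : ℝ => g (Real.sqrt t) + ε with hpedef
    have hpe_pos : ∀ t, 0 < pe t := fun t =>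
      add_pos_of_nonneg_of_pos (hg0 _ (Real.sqrt_nonneg t)) hε
    have hpe_cont : Continuous pe := (hg.comp Real.continuous_sqrt).add continuous_const
    set re_ := fun t : ℝ => (pe t)⁻¹ with hredef
    have hre_cont : Continuous re_ := hpe_cont.inv₀ fun t => (hpe_pos t).ne'
    have hBsa : IsSelfAdjoint (cfc re_ T) := cfc_predicate re_ T
    have hCsa : IsSelfAdjoint (cfc pe S) := cfc_predicate pe S
    have hBsym := isSelfAdjoint_iff_isSymmetric.mp hBsa
    have hCsym := isSelfAdjoint_iff_isSymmetric.mp hCsa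
    have hinter : A * cfc re_ T = cfc re_ S * A := aux_intertwine A re_ hre_cont
    have hinv : cfc pe S * cfc re_ S = 1 := by
      rw [← cfc_mul pe re_ S hpe_cont.continuousOn hre_cont.continuousOn]
      have : (fun t => pe t * re_ t) = fun _ : ℝ => 1 :=
        funext fun t => mul_inv_cancel₀ (hpe_pos t).ne'
      rw [this, cfc_const_one ℝ S]
    have hAeq : cfc pe S * (A * cfc re_ T) = A := by
      rw [hinter, ← mul_assoc, hinv, one_mul]
    set w := (A * cfc re_ T) x with hwdef
    have hinner : (inner ℂ (A x) y : ℂ) = inner ℂ w ((cfc pe S) y) := by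
      conv_lhs => rw [← hAeq]
      rw [ContinuousLinearMap.mul_apply]
      exact hCsym _ y
    have hCS : ‖(inner ℂ (A x) y : ℂ)‖ ≤ ‖w‖ * ‖(cfc pe S) y‖ := by
      rw [hinner]; exact norm_inner_le_norm _ _
    -- ‖w‖² = re ⟪cfc qe T x, x⟫
    set qe := fun t : ℝ => re_ t * (t * re_ t) with hqedef
    have hqe_cont : Continuous qe := hre_cont.mul (continuous_id.mul hre_cont)
    have hop : cfc re_ T * (T * cfc re_ T) = cfc qe T := by
      rw [hqedef, cfc_mul re_ (fun t => t * re_ t) T hre_cont.continuousOn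
        (continuous_id.mul hre_cont).continuousOn,
        cfc_mul (fun t : ℝ => t) re_ T continuous_id.continuousOn hre_cont.continuousOn,
        cfc_id' ℝ T]
    have hw2 : ‖w‖ ^ 2 = (inner ℂ ((cfc qe T) x) x : ℂ).re := by
      have h1 : ‖w‖ ^ 2 = (inner ℂ w w : ℂ).re := (inner_self_eq_norm_sq (𝕜 := ℂ) w).symm
      have h2 : (inner ℂ w w : ℂ) = inner ℂ ((T * cfc re_ T) x) ((cfc re_ T) x) := by
        rw [hwdef, ContinuousLinearMap.mul_apply, ContinuousLinearMap.mul_apply]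
        exact (adjoint_inner_left A _ _).symm
      have h3 : (inner ℂ ((T * cfc re_ T) x) ((cfc re_ T) x) : ℂ)
          = inner ℂ ((cfc re_ T) ((T * cfc re_ T) x)) x := (hBsym _ x).symm
      rw [h1, h2, h3, ← ContinuousLinearMap.mul_apply, hop]
    -- ‖C y‖² = re ⟪cfc pe2 S y, y⟫
    set pe2 := fun t : ℝ => pe t * pe t with hpe2def
    have hC2 : ‖(cfc pe S) y‖ ^ 2 = (inner ℂ ((cfc pe2 S) y) y : ℂ).re := by
      have h1 : ‖(cfc pe S) y‖ ^ 2 = (inner ℂ ((cfc pe S) y) ((cfc pe S) y) : ℂ).re :=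
        (inner_self_eq_norm_sq (𝕜 := ℂ) _).symm
      have h3 : (inner ℂ ((cfc pe S) y) ((cfc pe S) y) : ℂ)
          = inner ℂ ((cfc pe S) ((cfc pe S) y)) y := (hCsym _ y).symm
      rw [h1, h3, ← ContinuousLinearMap.mul_apply,
        ← cfc_mul pe pe S hpe_cont.continuousOn hpe_cont.continuousOn]
    -- cfc qe T ≤ cfc F T
    have hqF : cfc qe T ≤ cfc F T := by
      refine cfc_mono (fun t ht => ?_) hqe_cont.continuousOn hFcont.continuousOn
      have ht0 : 0 ≤ t := spectrum_nonneg_of_nonneg hT0 ht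
      set s := Real.sqrt t with hsdef
      have hs0 : 0 ≤ s := Real.sqrt_nonneg t
      have hst : s ^ 2 = t := Real.sq_sqrt ht0
      have hfs : 0 ≤ f s := hf0 s hs0
      have hpet : pe t = g s + ε := rfl
      have hgse : 0 < g s + ε := add_pos_of_nonneg_of_pos (hg0 s hs0) hε
      have h2 : s * (g s + ε)⁻¹ ≤ f s := by
        rw [← div_eq_mul_inv, div_le_iff₀ hgse]
        nlinarith [hfg s hs0]
      have heq : qe t = (s * (g s + ε)⁻¹) ^ 2 := by
        simp only [hqedef, hredef, hpet]
        rw [← hst]; ring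
      have hF : F t = f s ^ 2 := rfl
      rw [heq, hF]
      have hnn : 0 ≤ s * (g s + ε)⁻¹ := mul_nonneg hs0 (le_of_lt (inv_pos.mpr hgse))
      exact pow_le_pow_left₀ hnn h2 2
    have hwP : ‖w‖ ^ 2 ≤ P := by
      rw [hw2]
      have hpos := ((le_def _ _).mp hqF).inner_nonneg_left x
      replace hpos := (Complex.nonneg_iff.mp hpos).1
      rw [sub_apply, inner_sub_left, Complex.sub_re] at hpos
      linarith
    -- cfc pe2 S bound
    have hpe2b : cfc pe2 S ≤ cfc (fun t => (1 + ε) * G t + (ε + ε ^ 2)) S := by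
      refine cfc_mono (fun t ht => ?_) (hpe_cont.mul hpe_cont).continuousOn
        ((continuous_const.mul hGcont).add continuous_const).continuousOn
      have hgs : 0 ≤ g (Real.sqrt t) := hg0 _ (Real.sqrt_nonneg t)
      simp only [hpe2def, hpedef, hGdef]
      nlinarith [sq_nonneg (g (Real.sqrt t) - 1)]
    have hsplit : cfc (fun t => (1 + ε) * G t + (ε + ε ^ 2)) S
        = (1 + ε) • cfc G S + algebraMap ℝ (H →L[ℂ] H) (ε + ε ^ 2) := by
      rw [cfc_add_const (ε + ε ^ 2) (fun t => (1 + ε) * G t) S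
        (continuous_const.mul hGcont).continuousOn hSsa,
        cfc_const_mul (1 + ε) G S hGcont.continuousOn]
    have hQb : (inner ℂ ((cfc pe2 S) y) y : ℂ).re ≤ (1 + ε) * Q + (ε + ε ^ 2) * ‖y‖ ^ 2 := by
      have hpos := ((le_def _ _).mp hpe2b).inner_nonneg_left y
      replace hpos := (Complex.nonneg_iff.mp hpos).1
      rw [sub_apply, inner_sub_left, Complex.sub_re] at hpos
      have hrhs : (inner ℂ ((cfc (fun t => (1 + ε) * G t + (ε + ε ^ 2)) S) y) y : ℂ).re
          = (1 + ε) * Q + (ε + ε ^ 2) * ‖y‖ ^ 2 := by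
        rw [hsplit, add_apply, smul_apply, Algebra.algebraMap_eq_smul_one, smul_apply, ContinuousLinearMap.one_apply,
          inner_add_left, RCLike.real_smul_eq_coe_smul (K := ℂ),
          RCLike.real_smul_eq_coe_smul (K := ℂ), inner_smul_left, inner_smul_left]
        simp only [map_add, map_one, map_pow, Complex.conj_ofReal, Complex.one_re,
          Complex.one_im, Complex.add_im, Complex.ofReal_im, Complex.coe_algebraMap, ← Complex.ofReal_pow, Complex.add_re, Complex.mul_re, Complex.ofReal_re,
          Complex.ofReal_im, inner_self_eq_norm_sq_to_K (𝕜 := ℂ) y, hQdef]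
        push_cast
        ring
      linarith
    -- combine
    have hwnn : (0:ℝ) ≤ ‖w‖ * ‖(cfc pe S) y‖ := by positivity
    have step : ‖(inner ℂ (A x) y : ℂ)‖ ^ 2 ≤ (‖w‖ ^ 2) * (‖(cfc pe S) y‖ ^ 2) := by
      calc ‖(inner ℂ (A x) y : ℂ)‖ ^ 2 ≤ (‖w‖ * ‖(cfc pe S) y‖) ^ 2 := by
            exact pow_le_pow_left₀ (norm_nonneg _) hCS 2
        _ = (‖w‖ ^ 2) * (‖(cfc pe S) y‖ ^ 2) := by ring
    have hCy2 : ‖(cfc pe S) y‖ ^ 2 ≤ (1 + ε) * Q + (ε + ε ^ 2) * ‖y‖ ^ 2 := by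
      rw [hC2]; exact hQb
    have hfinal : ‖(inner ℂ (A x) y : ℂ)‖ ^ 2
        ≤ P * ((1 + ε) * Q + (ε + ε ^ 2) * ‖y‖ ^ 2) := by
      calc ‖(inner ℂ (A x) y : ℂ)‖ ^ 2 ≤ (‖w‖ ^ 2) * (‖(cfc pe S) y‖ ^ 2) := step
        _ ≤ P * ((1 + ε) * Q + (ε + ε ^ 2) * ‖y‖ ^ 2) := by
            apply mul_le_mul hwP hCy2 (by positivity)
            exact hP0
    have hε2 : ε ^ 2 ≤ ε := by nlinarith
    have hPy : (0:ℝ) ≤ P * ‖y‖ ^ 2 := mul_nonneg hP0 (sq_nonneg ‖y‖)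
    have hstep2 : P * ((1 + ε) * Q + (ε + ε ^ 2) * ‖y‖ ^ 2)
        ≤ P * Q + ε * (P * Q + 2 * P * ‖y‖ ^ 2) := by
      nlinarith [mul_le_mul_of_nonneg_left hε2 hPy]
    linarith
  -- conclude via ε → 0
  refine le_of_forall_pos_le_add fun δ hδ => ?_
  have hC0 : (0:ℝ) ≤ P * Q + 2 * P * ‖y‖ ^ 2 := by positivity
  set ε := min 1 (δ / (P * Q + 2 * P * ‖y‖ ^ 2 + 1)) with hεdef
  have hεpos : 0 < ε := lt_min one_pos (div_pos hδ (by linarith))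
  have hkey := key ε hεpos (min_le_left _ _)
  have h1 : ε ≤ δ / (P * Q + 2 * P * ‖y‖ ^ 2 + 1) := min_le_right _ _
  have h2 : ε * (P * Q + 2 * P * ‖y‖ ^ 2) ≤ δ := by
    calc ε * (P * Q + 2 * P * ‖y‖ ^ 2)
        ≤ (δ / (P * Q + 2 * P * ‖y‖ ^ 2 + 1)) * (P * Q + 2 * P * ‖y‖ ^ 2) :=
          mul_le_mul_of_nonneg_right h1 hC0
      _ ≤ δ := by
          rw [div_mul_eq_mul_div, div_le_iff₀ (by linarith)]
          nlinarith
  linarith
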